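/- Let X be a real Banach space, let A ⊆ X be a nonempty, closed, convex and bounded set, let a ∈ X \ A, and let x̄ be a point of the multidirectional interval [a,A] with x̄ ∉ A. Then there exists δ > 0 such that B(x̄; δ) ∩ (x̄ + C(0; A − a)) ⊆ [a,A], where B(x̄; δ) is the closed ball of radius δ around x̄. -/

import Mathlib

open Set

/-- The multidirectional interval `[a, A] = {a + t • (x - a) : t ∈ [0,1], x ∈ A}`. -/
def mdInterval {X : Type*} [AddCommGroup X] [Module ℝ X] (a : X) (A : Set X) : Set X :=
  {y | ∃ t ∈ Set.Icc (0 : ℝ) 1, ∃ x ∈ A, y = a + t • (x - a)}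

/-- The cone generated by `A` with apex `a`: `C(a; A) = {a + t • (x - a) : t ≥ 0, x ∈ A}`. -/
def genCone {X : Type*} [AddCommGroup X] [Module ℝ X] (a : X) (A : Set X) : Set X :=
  {y | ∃ t : ℝ, 0 ≤ t ∧ ∃ x ∈ A, y = a + t • (x - a)}

theorem ball_inter_cone_subset_mdInterval
    {X : Type*} [NormedAddCommGroup X] [NormedSpace ℝ X] [CompleteSpace X]
    (A : Set X) (hA : A.Nonempty) (hAcl : IsClosed A) (hAconv : Convex ℝ A)
    (hAbd : Bornology.IsBounded A)
    (a : X) (haA : a ∉ A)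
    (xbar : X) (hxbar : xbar ∈ mdInterval a A) (hxbarA : xbar ∉ A) :
    ∃ δ > (0 : ℝ),
      Metric.closedBall xbar δ ∩
        ((fun v => xbar + v) '' genCone 0 ((fun x => x - a) '' A)) ⊆
      mdInterval a A := by
  obtain ⟨t₀, ⟨ht0, ht1⟩, x₀, hx₀, hxb⟩ := hxbar
  have ht0lt : t₀ < 1 := by
    rcases lt_or_eq_of_le ht1 with h | h
    · exact h
    · exact absurd (by rw [hxb, h, one_smul]; simpa using hx₀) hxbarA
  have hd : 0 < Metric.infDist a A := (hAcl.notMem_iff_infDist_pos hA).mp haA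
  have h1t : 0 < 1 - t₀ := by linarith
  refine ⟨(1 - t₀) * Metric.infDist a A, mul_pos h1t hd, ?_⟩
  rintro p ⟨hp1, v, ⟨s, hs, w, ⟨x, hx, rfl⟩, hveq⟩, rfl⟩
  simp only [zero_add, sub_zero] at hveq
  simp only [] at hp1 ⊢
  -- hveq : v = s • (x - a)  (after simplification)
  have hvnorm : ‖v‖ ≤ (1 - t₀) * Metric.infDist a A := by
    have := hp1
    rw [Metric.mem_closedBall, dist_eq_norm, add_sub_cancel_left] at this
    exact this
  have hxa : Metric.infDist a A ≤ ‖x - a‖ := by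
    have := Metric.infDist_le_dist_of_mem (x := a) hx
    rwa [dist_eq_norm, ← norm_neg, neg_sub] at this
  have hs1 : s ≤ 1 - t₀ := by
    have h1 : s * Metric.infDist a A ≤ s * ‖x - a‖ :=
      mul_le_mul_of_nonneg_left hxa hs
    have h2 : s * ‖x - a‖ ≤ (1 - t₀) * Metric.infDist a A := by
      rw [← norm_smul_of_nonneg hs, ← hveq]; exact hvnorm
    have := le_of_mul_le_mul_right (le_trans h1 h2) hd
    exact this
  rcases eq_or_lt_of_le hs with hs0 | hspos
  · -- s = 0, the point is xbar itself
    refine ⟨t₀, ⟨ht0, ht1⟩, x₀, hx₀, ?_⟩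
    rw [hveq, ← hs0, zero_smul, add_zero, hxb]
  · -- s > 0
    set t := t₀ + s with htdef
    have htpos : 0 < t := by positivity
    refine ⟨t, ⟨htpos.le, by rw [htdef]; linarith⟩,
      (t₀ / t) • x₀ + (s / t) • x, hAconv hx₀ hx (div_nonneg ht0 htpos.le)
        (div_nonneg hspos.le htpos.le) (by field_simp; exact htdef.symm), ?_⟩
    have htne : t ≠ 0 := htpos.ne'
    rw [hveq, hxb, htdef]
    match_scalars <;> (field_simp; try ring)
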